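/- Let X be an infinite-dimensional complex Banach space and T a bounded linear operator on X. If there exists a nonzero complex polynomial P such that P(T) is a Riesz operator, then the Fredholm spectrum σ_F(T) is a finite set; in particular 0 ∉ acc σ_F(T), i.e., T is pseudo-B-Fredholm. -/

import Mathlib

open Filter Topology Polynomial

variable {E : Type*} [NormedAddCommGroup E] [NormedSpace ℂ E]

/-- A (continuous linear) operator is Fredholm if its kernel is finite-dimensional and
its range has finite codimension. -/
def IsFredholm (T : E →L[ℂ] E) : Prop :=
  FiniteDimensional ℂ (LinearMap.ker (T : E →ₗ[ℂ] E)) ∧ FiniteDimensional ℂ (E ⧸ LinearMap.range (T : E →ₗ[ℂ] E))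

/-- The Fredholm (essential) spectrum. -/
def fredholmSpectrum (T : E →L[ℂ] E) : Set ℂ := {lam : ℂ | ¬ IsFredholm (T - lam • 1)}

/-- `T` is pseudo-B-Fredholm if `0` is not an accumulation point of its Fredholm spectrum. -/
def IsPseudoBFredholm (T : E →L[ℂ] E) : Prop :=
  ¬ AccPt (0 : ℂ) (Filter.principal (fredholmSpectrum T))

/-- A Riesz operator: `T - λ` is Fredholm for every `λ ≠ 0`. -/
def IsRiesz (T : E →L[ℂ] E) : Prop := ∀ lam : ℂ, lam ≠ 0 → IsFredholm (T - lam • 1)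

lemma range_pow_invariant (T : E →L[ℂ] E) (n : ℕ) :
    ∀ x ∈ LinearMap.range ((T ^ n : E →L[ℂ] E) : E →ₗ[ℂ] E),
      T x ∈ LinearMap.range ((T ^ n : E →L[ℂ] E) : E →ₗ[ℂ] E) := by
  rintro x ⟨y, rfl⟩
  refine ⟨T y, ?_⟩
  change (T ^ n) (T y) = T ((T ^ n) y)
  have h1 : (T ^ n) (T y) = (T ^ n * T) y := rfl
  have h2 : T ((T ^ n) y) = (T * T ^ n) y := rfl
  rw [h1, h2, ← pow_succ, ← pow_succ']

/-- Restriction of a continuous linear operator to an invariant submodule. -/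
def restrictCLM (T : E →L[ℂ] E) (M : Submodule ℂ E) (h : ∀ x ∈ M, T x ∈ M) : M →L[ℂ] M where
  toLinearMap := (T : E →ₗ[ℂ] E).restrict h
  cont := Continuous.subtype_mk (T.continuous.comp continuous_subtype_val) _

/-- `T` is B-Fredholm if for some `n` the range of `T ^ n` is closed and the operator induced
by `T` on it is Fredholm. -/
def IsBFredholm (T : E →L[ℂ] E) : Prop :=
  ∃ n : ℕ, IsClosed ((LinearMap.range ((T ^ n : E →L[ℂ] E) : E →ₗ[ℂ] E) : Submodule ℂ E) : Set E) ∧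
    IsFredholm (restrictCLM T (LinearMap.range ((T ^ n : E →L[ℂ] E) : E →ₗ[ℂ] E)) (range_pow_invariant T n))

/-- The essential ascent: the least `n` with `ker T ∩ range (T ^ n)` finite-dimensional. -/
noncomputable def essAscent (T : E →L[ℂ] E) : ℕ∞ :=
  ⨅ n ∈ {m : ℕ | FiniteDimensional ℂ ↥(LinearMap.ker (T : E →ₗ[ℂ] E) ⊓ LinearMap.range ((T ^ m : E →L[ℂ] E) : E →ₗ[ℂ] E))}, (n : ℕ∞)

/-- The essential descent: the least `n` with `range T + ker (T ^ n)` of finite codimension. -/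
noncomputable def essDescent (T : E →L[ℂ] E) : ℕ∞ :=
  ⨅ n ∈ {m : ℕ | FiniteDimensional ℂ (E ⧸ (LinearMap.range (T : E →ₗ[ℂ] E) ⊔ LinearMap.ker ((T ^ m : E →L[ℂ] E) : E →ₗ[ℂ] E)))}, (n : ℕ∞)

/-- `0` is a pole (or regular point) of order at most `m` of the resolvent of `Π(T)` in the
Calkin algebra: there is `S` with `TS - ST`, `STS - S` and `T^(m+1) S - T^m` all compact. -/
def DrazinAt (T : E →L[ℂ] E) (m : ℕ) : Prop :=
  ∃ S : E →L[ℂ] E, IsCompactOperator ⇑(T * S - S * T) ∧ IsCompactOperator ⇑(S * T * S - S) ∧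
    IsCompactOperator ⇑(T ^ (m + 1) * S - T ^ m)

/-- `Π(T)` is Drazin invertible in the Calkin algebra. -/
def CalkinDrazin (T : E →L[ℂ] E) : Prop := ∃ m : ℕ, DrazinAt T m

/-- A power compact operator. -/
def IsPowerCompact (K : E →L[ℂ] E) : Prop := ∃ m : ℕ, 1 ≤ m ∧ IsCompactOperator ⇑(K ^ m)

/-- An inessential operator: `1 - S * J` is Fredholm for every `S`. -/
def IsInessential (J : E →L[ℂ] E) : Prop := ∀ S : E →L[ℂ] E, IsFredholm (1 - S * J)

/-- The norm of `Π(A)` in the Calkin algebra: `inf {‖A + K‖ : K compact}`. -/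
noncomputable def calkinNorm (A : E →L[ℂ] E) : ℝ :=
  sInf {r : ℝ | ∃ K : E →L[ℂ] E, IsCompactOperator ⇑K ∧ r = ‖A + K‖}

/-- The ergodic means `M_n(T) = (1 + T + T² + ⋯ + Tⁿ)/n`. -/
noncomputable def meanOp (T : E →L[ℂ] E) (n : ℕ) : E →L[ℂ] E :=
  ((n : ℂ))⁻¹ • ∑ i ∈ Finset.range (n + 1), T ^ i

lemma fredholm_of_factor (A B F : E →L[ℂ] E) (h1 : F = A * B) (h2 : F = B * A)
    (hF : IsFredholm F) : IsFredholm A := by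
  obtain ⟨hk, hr⟩ := hF
  constructor
  · have hker : LinearMap.ker (A : E →ₗ[ℂ] E) ≤ LinearMap.ker (F : E →ₗ[ℂ] E) := by
      intro x hx
      simp only [LinearMap.mem_ker] at hx ⊢
      rw [h2]
      show B (A x) = 0
      rw [show A x = 0 from hx, map_zero]
    exact Submodule.finiteDimensional_of_le hker
  · have hle : LinearMap.range (F : E →ₗ[ℂ] E) ≤ LinearMap.range (A : E →ₗ[ℂ] E) := by
      rintro _ ⟨x, rfl⟩
      exact ⟨B x, by rw [h1]; rfl⟩
    let f := Submodule.mapQ (LinearMap.range (F : E →ₗ[ℂ] E)) (LinearMap.range (A : E →ₗ[ℂ] E)) LinearMap.id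
      (by simpa using hle)
    have hsurj : Function.Surjective f := by
      intro y
      obtain ⟨x, rfl⟩ := Submodule.mkQ_surjective _ y
      exact ⟨Submodule.Quotient.mk x, rfl⟩
    exact Module.Finite.of_surjective f hsurj

variable {X : Type*} [NormedAddCommGroup X] [NormedSpace ℂ X] [CompleteSpace X]


/-- A polynomially Riesz operator has finite Fredholm spectrum; in particular it is
pseudo-B-Fredholm. -/
theorem polynomiallyRiesz_isPseudoBFredholm (hX : ¬ FiniteDimensional ℂ X) (T : X →L[ℂ] X)
    (hT : ∃ P : Polynomial ℂ, P ≠ 0 ∧ IsRiesz (Polynomial.aeval T P)) :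
    (fredholmSpectrum T).Finite ∧ IsPseudoBFredholm T := by
  obtain ⟨P, hP, hR⟩ := hT
  have key : fredholmSpectrum T ⊆ {z : ℂ | P.IsRoot z} := by
    intro lam hlam
    by_contra hev
    apply hlam
    obtain ⟨Q, hQ⟩ : (Polynomial.X - Polynomial.C lam) ∣ P - Polynomial.C (P.eval lam) :=
      Polynomial.X_sub_C_dvd_sub_C_eval
    have hF : IsFredholm (Polynomial.aeval T P - (P.eval lam) • 1) := hR _ hev
    have heq : Polynomial.aeval T P - (P.eval lam) • 1 =
        Polynomial.aeval T (P - Polynomial.C (P.eval lam)) := by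
      rw [map_sub, Polynomial.aeval_C, Algebra.algebraMap_eq_smul_one]
    have hA : Polynomial.aeval T (Polynomial.X - Polynomial.C lam) = T - lam • 1 := by
      rw [map_sub, Polynomial.aeval_X, Polynomial.aeval_C, Algebra.algebraMap_eq_smul_one]
    refine fredholm_of_factor _ (Polynomial.aeval T Q) _ ?_ ?_ hF
    · rw [heq, hQ, map_mul, hA]
    · rw [heq, hQ, mul_comm (Polynomial.X - Polynomial.C lam) Q, map_mul, hA]
  have hfin : (fredholmSpectrum T).Finite :=
    Set.Finite.subset (Polynomial.finite_setOf_isRoot hP) key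
  refine ⟨hfin, ?_⟩
  intro hacc
  rw [accPt_principal_iff_clusterPt] at hacc
  have h0 : (0 : ℂ) ∈ closure (fredholmSpectrum T \ {0}) :=
    mem_closure_iff_clusterPt.mpr hacc
  rw [IsClosed.closure_eq (hfin.diff.isClosed)] at h0
  exact h0.2 rfl
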